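/- Let R be a ring. Then R is a UJ# ring if and only if the formal power series ring R[[X]] is a UJ# ring. -/

import Mathlib

/-- `J#(R)`: the set of elements `z` such that `z ^ n` lies in the Jacobson radical
(the intersection of the maximal left ideals) for some `n ≥ 1`. -/
def Jsharp (R : Type*) [Ring R] : Set R :=
  {z : R | ∃ n : ℕ, 1 ≤ n ∧ z ^ n ∈ Ideal.jacobson (⊥ : Ideal R)}

/-- A ring is a `UJ#` ring if `u - 1 ∈ J#(R)` for every unit `u`. -/
def IsUJsharp (R : Type*) [Ring R] : Prop :=
  ∀ u : Rˣ, ((u : R) - 1) ∈ Jsharp R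

open PowerSeries

section aux

variable {R : Type*} [Ring R]

private lemma myConstantCoeffSurj :
    Function.Surjective (constantCoeff (R := R)) := fun r => ⟨C (R := R) r, constantCoeff_C r⟩

/-- Every maximal left ideal of `R⟦X⟧` contains `X`. -/
private lemma X_mem_of_isMaximal (M : Ideal R⟦X⟧) (hM : M.IsMaximal) :
    (X : R⟦X⟧) ∈ M := by
  by_contra hX
  have hlt : M < M ⊔ Ideal.span {(X : R⟦X⟧)} := by
    rw [left_lt_sup]
    intro hle
    exact hX (hle (Ideal.subset_span rfl))
  have htop : M ⊔ Ideal.span {(X : R⟦X⟧)} = ⊤ := hM.out.2 _ hlt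
  obtain ⟨m, hm, y, hy, hmy⟩ := Submodule.mem_sup.mp (htop ▸ Submodule.mem_top :
    (1 : R⟦X⟧) ∈ M ⊔ Ideal.span {(X : R⟦X⟧)})
  obtain ⟨g, hg⟩ := Submodule.mem_span_singleton.mp hy
  have hmu : IsUnit m := by
    rw [PowerSeries.isUnit_iff_constantCoeff]
    have h1 : constantCoeff (R := R) m + constantCoeff (R := R) y = 1 := by
      rw [← map_add, hmy, map_one]
    have h2 : constantCoeff (R := R) y = 0 := by
      rw [← hg, smul_eq_mul, map_mul, constantCoeff_X, mul_zero]
    rw [h2, add_zero] at h1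
    rw [h1]; exact isUnit_one
  exact hM.ne_top (Ideal.eq_top_of_isUnit_mem M hm hmu)

/-- If a power series is in a maximal left ideal `M`, then the constant term
(embedded via `C`) is in `M` too. -/
private lemma C_constantCoeff_mem (M : Ideal R⟦X⟧) (hM : M.IsMaximal)
    {f : R⟦X⟧} (hf : f ∈ M) : C (R := R) (constantCoeff (R := R) f) ∈ M := by
  have hXM : (X : R⟦X⟧) ∈ M := X_mem_of_isMaximal M hM
  have hsub : f - C (R := R) (constantCoeff (R := R) f) ∈ M := by
    rw [PowerSeries.sub_const_eq_shift_mul_X]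
    exact M.mul_mem_left _ hXM
  have := M.sub_mem hf hsub
  simpa using this

/-- The comap of a maximal left ideal of `R⟦X⟧` along `C` is a maximal left ideal of `R`. -/
private lemma comap_C_isMaximal (M : Ideal R⟦X⟧) (hM : M.IsMaximal) :
    (Ideal.comap (C (R := R)) M).IsMaximal := by
  rw [Ideal.isMaximal_iff]
  constructor
  · intro h1
    exact hM.ne_top (Ideal.eq_top_of_isUnit_mem M (by simpa using h1) isUnit_one)
  · intro J x hle hxM' hxJ
    have hCx : (C (R := R) x : R⟦X⟧) ∉ M := hxM'
    have hlt : M < M ⊔ Ideal.span {(C (R := R) x : R⟦X⟧)} := by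
      rw [left_lt_sup]
      intro hle'
      exact hCx (hle' (Ideal.subset_span rfl))
    have htop : M ⊔ Ideal.span {(C (R := R) x : R⟦X⟧)} = ⊤ := hM.out.2 _ hlt
    obtain ⟨m, hm, y, hy, hmy⟩ := Submodule.mem_sup.mp (htop ▸ Submodule.mem_top :
      (1 : R⟦X⟧) ∈ M ⊔ Ideal.span {(C (R := R) x : R⟦X⟧)})
    obtain ⟨g, hg⟩ := Submodule.mem_span_singleton.mp hy
    have h1 : constantCoeff (R := R) m + constantCoeff (R := R) y = 1 := by
      rw [← map_add, hmy, map_one]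
    have h2 : constantCoeff (R := R) y = constantCoeff (R := R) g * x := by
      rw [← hg, smul_eq_mul, map_mul, constantCoeff_C]
    have hmM' : constantCoeff (R := R) m ∈ Ideal.comap (C (R := R)) M := by
      show C (R := R) (constantCoeff (R := R) m) ∈ M
      exact C_constantCoeff_mem M hM hm
    have : (1 : R) = constantCoeff (R := R) m + constantCoeff (R := R) g * x := by
      rw [← h2, h1]
    rw [this]
    exact J.add_mem (hle hmM') (J.mul_mem_left _ hxJ)

/-- Membership in the Jacobson radical of `R⟦X⟧` is detected by the constant coefficient. -/
private lemma mem_jacobson_powerSeries_iff (f : R⟦X⟧) :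
    f ∈ Ideal.jacobson (⊥ : Ideal R⟦X⟧) ↔
      constantCoeff (R := R) f ∈ Ideal.jacobson (⊥ : Ideal R) := by
  constructor
  · intro hf
    rw [Ideal.jacobson] at hf ⊢
    rw [Ideal.mem_sInf] at hf ⊢
    rintro N ⟨-, hN⟩
    haveI := hN
    exact hf ⟨bot_le, Ideal.comap_isMaximal_of_surjective (constantCoeff (R := R))
      myConstantCoeffSurj⟩
  · intro hf
    rw [Ideal.jacobson] at hf ⊢
    rw [Ideal.mem_sInf] at hf ⊢
    rintro M ⟨-, hM⟩
    have hC : C (R := R) (constantCoeff (R := R) f) ∈ M := by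
      have : constantCoeff (R := R) f ∈ Ideal.comap (C (R := R)) M :=
        hf ⟨bot_le, comap_C_isMaximal M hM⟩
      exact this
    have hsub : f - C (R := R) (constantCoeff (R := R) f) ∈ M := by
      rw [PowerSeries.sub_const_eq_shift_mul_X]
      exact M.mul_mem_left _ (X_mem_of_isMaximal M hM)
    simpa using M.add_mem hC hsub

private lemma mem_Jsharp_powerSeries_iff (f : R⟦X⟧) :
    f ∈ Jsharp R⟦X⟧ ↔ constantCoeff (R := R) f ∈ Jsharp R := by
  constructor
  · rintro ⟨n, hn, hj⟩
    exact ⟨n, hn, by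
      rw [← map_pow]
      exact (mem_jacobson_powerSeries_iff _).mp hj⟩
  · rintro ⟨n, hn, hj⟩
    exact ⟨n, hn, (mem_jacobson_powerSeries_iff _).mpr (by rwa [map_pow])⟩

end aux

theorem isUJsharp_iff_powerSeries (R : Type*) [Ring R] :
    IsUJsharp R ↔ IsUJsharp (PowerSeries R) := by
  constructor
  · intro h u
    rw [mem_Jsharp_powerSeries_iff]
    have hu : IsUnit (constantCoeff (R := R) (u : R⟦X⟧)) :=
      PowerSeries.isUnit_iff_constantCoeff.mp u.isUnit
    obtain ⟨v, hv⟩ := hu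
    have := h v
    rw [map_sub, map_one, ← hv]
    exact this
  · intro h u
    have := h (Units.map (C (R := R) : R →* R⟦X⟧) u)
    rw [mem_Jsharp_powerSeries_iff] at this
    simpa using this
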